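/- For α = 0.9616 and every integer w ≥ 45, and every s with 1/(1 + (16/17)^w) ≤ s < 1, we have α^{−⌈log_{45}(w+1)⌉}·(1 − s)·ln(s/(1 − s)) ≤ 1/5. -/

import Mathlib

open Real

/-- Monotonicity of `t ↦ t * log (1/t)` on `(0, 1/3]`. -/
lemma aux_negMulLog_mono (t q : ℝ) (ht : 0 < t) (htq : t ≤ q) (hq : q ≤ 1/3) :
    t * Real.log (1/t) ≤ q * Real.log (1/q) := by
  have hq0 : 0 < q := lt_of_lt_of_le ht htq
  have h1 : Real.log (q/t) ≤ q/t - 1 := Real.log_le_sub_one_of_pos (by positivity)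
  have h2 : (1:ℝ) ≤ Real.log (1/q) := by
    have he : Real.exp 1 < 2.7182818286 := Real.exp_one_lt_d9
    have h3 : Real.exp 1 ≤ 1/q := by
      have : (3:ℝ) ≤ 1/q := by rw [le_div_iff₀ hq0]; linarith
      linarith
    calc (1:ℝ) = Real.log (Real.exp 1) := (Real.log_exp 1).symm
      _ ≤ Real.log (1/q) := Real.log_le_log (Real.exp_pos 1) h3
  have h4 : Real.log (1/t) = Real.log (1/q) + Real.log (q/t) := by
    rw [← Real.log_mul (by positivity) (by positivity)]
    congr 1
    field_simp
  rw [h4]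
  have h5 : t * Real.log (q/t) ≤ q - t := by
    calc t * Real.log (q/t) ≤ t * (q/t - 1) := mul_le_mul_of_nonneg_left h1 ht.le
      _ = q - t := by field_simp
  nlinarith [mul_le_mul_of_nonneg_right htq (le_trans zero_le_one h2)]

/-- `log (17/16) ≤ 1073/17424 = 1/16 - 1/1089`. -/
lemma aux_log_17_16 : Real.log (17/16) ≤ 1073/17424 := by
  have key : Real.log (17/16) = 2 * Real.log (33/32) - Real.log (1089/1088) := by
    have : (17/16 : ℝ) = (33/32)^2 / (1089/1088) := by norm_num
    rw [this, Real.log_div (by norm_num) (by norm_num), Real.log_pow]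
    push_cast; ring
  have h1 : Real.log (33/32) ≤ 1/32 := by
    have := Real.log_le_sub_one_of_pos (show (0:ℝ) < 33/32 by norm_num)
    linarith
  have h2 : (1:ℝ)/1089 ≤ Real.log (1089/1088) := by
    have := Real.log_le_sub_one_of_pos (show (0:ℝ) < 1088/1089 by norm_num)
    have hinv : Real.log (1088/1089 : ℝ) = - Real.log (1089/1088) := by
      rw [show (1088/1089 : ℝ) = (1089/1088)⁻¹ by norm_num, Real.log_inv]
    rw [hinv] at this
    linarith
  rw [key]; linarith

/-- The quantity `(w+1)^c * ((16/17)^w * w)` is decreasing for `w ≥ 45`. -/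
lemma aux_F_mono (c : ℝ) (hc0 : 0 ≤ c) (hc1 : c ≤ 1) :
    ∀ w : ℕ, 45 ≤ w →
      ((w:ℝ)+1) ^ c * ((16/17:ℝ)^w * w) ≤ (46:ℝ) ^ c * ((16/17:ℝ)^45 * 45) := by
  intro w hw
  induction w, hw using Nat.le_induction with
  | base => norm_num
  | succ n hn ih =>
    have hn1 : (0:ℝ) < (n:ℝ) + 1 := by positivity
    have h1 : ((n:ℝ)+1+1) ^ c ≤ ((n:ℝ)+1) ^ c * (((n:ℝ)+2)/((n:ℝ)+1)) := by
      have heq : ((n:ℝ)+1+1) = ((n:ℝ)+1) * (((n:ℝ)+2)/((n:ℝ)+1)) := by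
        field_simp; ring
      rw [heq, Real.mul_rpow (by positivity) (by positivity)]
      apply mul_le_mul_of_nonneg_left _ (by positivity)
      calc (((n:ℝ)+2)/((n:ℝ)+1)) ^ c ≤ (((n:ℝ)+2)/((n:ℝ)+1)) ^ (1:ℝ) := by
            apply Real.rpow_le_rpow_of_exponent_le _ hc1
            rw [le_div_iff₀ hn1]; linarith
        _ = ((n:ℝ)+2)/((n:ℝ)+1) := Real.rpow_one _
    have hmid : ((n:ℝ)+1) ^ c * (((n:ℝ)+2)/((n:ℝ)+1)) * ((16/17:ℝ)^(n+1) * ((n:ℝ)+1))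
        ≤ ((n:ℝ)+1) ^ c * ((16/17:ℝ)^n * n) := by
      have hexp : ((n:ℝ)+1) ^ c * (((n:ℝ)+2)/((n:ℝ)+1)) * ((16/17:ℝ)^(n+1) * ((n:ℝ)+1))
          = ((n:ℝ)+1) ^ c * ((16/17:ℝ)^n * ((16/17) * ((n:ℝ)+2))) := by
        rw [pow_succ]
        field_simp
      rw [hexp]
      apply mul_le_mul_of_nonneg_left _ (by positivity)
      apply mul_le_mul_of_nonneg_left _ (by positivity)
      have : (45:ℝ) ≤ (n:ℝ) := by exact_mod_cast hn
      linarith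
    push_cast
    calc ((n:ℝ)+1+1) ^ c * ((16/17:ℝ)^(n+1) * ((n:ℝ)+1))
        ≤ (((n:ℝ)+1) ^ c * (((n:ℝ)+2)/((n:ℝ)+1))) * ((16/17:ℝ)^(n+1) * ((n:ℝ)+1)) := by
          apply mul_le_mul_of_nonneg_right h1 (by positivity)
      _ ≤ ((n:ℝ)+1) ^ c * ((16/17:ℝ)^n * n) := hmid
      _ ≤ (46:ℝ) ^ c * ((16/17:ℝ)^45 * 45) := ih

/-- for `α = 0.9616`, integers `w ≥ 45` and
`1/(1 + (16/17)^w) ≤ s < 1`, we have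
`α^{−⌈log₄₅(w+1)⌉}·(1 − s)·ln(s/(1 − s)) ≤ 1/5`. -/
theorem decay_contribution_bound (w : ℕ) (hw : 45 ≤ w) (s : ℝ)
    (hs1 : 1 / (1 + (16 / 17 : ℝ) ^ w) ≤ s) (hs2 : s < 1) :
    (0.9616 : ℝ) ^ (-⌈Real.logb 45 ((w : ℝ) + 1)⌉) * ((1 - s) * Real.log (s / (1 - s)))
      ≤ 1 / 5 := by
  set q : ℝ := (16/17:ℝ)^w with hqdef
  have hq0 : 0 < q := by positivity
  have hq45 : q ≤ (16/17:ℝ)^45 := by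
    rw [hqdef]
    exact pow_le_pow_of_le_one (by norm_num) (by norm_num) hw
  have hq45' : ((16:ℝ)/17)^45 ≤ 0.06535 := by norm_num
  have hq3 : q ≤ 1/3 := by linarith
  -- s bounds
  have hs0 : (0:ℝ) < s := lt_of_lt_of_le (by positivity) hs1
  have ht0 : (0:ℝ) < 1 - s := by linarith
  have htq : 1 - s ≤ q := by
    have h1q : (0:ℝ) < 1 + q := by linarith
    have : 1 - q / (1+q) ≤ s := by
      have : 1 / (1+q) = 1 - q/(1+q) := by field_simp; ring
      linarith [hs1, this]
    have : q/(1+q) ≤ q := by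
      rw [div_le_iff₀ h1q]; nlinarith
    linarith
  -- the log exponent
  set c : ℝ := -Real.log 0.9616 / Real.log 45 with hcdef
  have hlog45 : (2:ℝ) ≤ Real.log 45 := by
    have he : Real.exp 1 < 2.7182818286 := Real.exp_one_lt_d9
    have h2 : Real.exp 2 ≤ 45 := by
      have : Real.exp 2 = Real.exp 1 ^ 2 := by
        rw [← Real.exp_nat_mul]; norm_num
      nlinarith [Real.exp_pos 1]
    calc (2:ℝ) = Real.log (Real.exp 2) := (Real.log_exp 2).symm
      _ ≤ Real.log 45 := Real.log_le_log (Real.exp_pos 2) h2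
  have hla : -Real.log 0.9616 ≤ 0.04 := by
    have h1 : Real.exp (-0.04) ≤ 0.9616 := by
      have h2 : (1:ℝ) + 0.04 ≤ Real.exp 0.04 := by
        have := Real.add_one_le_exp (0.04:ℝ); linarith
      have h3 : Real.exp (-0.04) = (Real.exp 0.04)⁻¹ := by
        rw [← Real.exp_neg]
      rw [h3, inv_le_comm₀ (Real.exp_pos _) (by norm_num)]
      calc (0.9616:ℝ)⁻¹ ≤ 1.04 := by norm_num
        _ ≤ Real.exp 0.04 := by linarith
    have := Real.log_le_log (Real.exp_pos _) h1
    rw [Real.log_exp] at this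
    linarith
  have hla0 : 0 ≤ -Real.log 0.9616 := by
    have : Real.log 0.9616 < 0 := Real.log_neg (by norm_num) (by norm_num)
    linarith
  have hc0 : 0 ≤ c := by
    apply div_nonneg hla0 (by linarith)
  have hc1 : c ≤ 1 := by
    rw [hcdef, div_le_one (by linarith)]
    linarith
  -- bound the ceiling power
  set k : ℤ := ⌈Real.logb 45 ((w : ℝ) + 1)⌉ with hkdef
  have hA : (0.9616 : ℝ) ^ (-k) ≤ (0.9616:ℝ)⁻¹ * ((w:ℝ)+1) ^ c := by
    have hw1 : (0:ℝ) < (w:ℝ) + 1 := by positivity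
    have e1 : (0.9616 : ℝ) ^ (-k) = (0.9616 : ℝ) ^ ((-k : ℤ) : ℝ) := by
      rw [Real.rpow_intCast]
    have e2 : (0.9616 : ℝ) ^ ((-k : ℤ) : ℝ) ≤
        (0.9616 : ℝ) ^ (-(Real.logb 45 ((w:ℝ)+1)) - 1) := by
      apply Real.rpow_le_rpow_of_exponent_ge (by norm_num) (by norm_num)
      have := Int.ceil_lt_add_one (Real.logb 45 ((w : ℝ) + 1))
      push_cast
      linarith
    have e3 : (0.9616 : ℝ) ^ (-(Real.logb 45 ((w:ℝ)+1)) - 1)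
        = (0.9616:ℝ)⁻¹ * ((w:ℝ)+1) ^ c := by
      rw [Real.rpow_def_of_pos (by norm_num : (0:ℝ) < 0.9616),
        Real.rpow_def_of_pos hw1, Real.logb,
        show ((0.9616:ℝ)⁻¹ = Real.exp (-Real.log 0.9616)) by
          rw [Real.exp_neg, Real.exp_log (by norm_num : (0:ℝ) < 0.9616)],
        ← Real.exp_add]
      congr 1
      rw [hcdef]
      ring
    rw [e1]
    exact le_trans e2 (le_of_eq e3)
  -- bound the (1-s) log factor
  have hB : (1 - s) * Real.log (s / (1 - s)) ≤ q * ((w:ℝ) * Real.log (17/16)) := by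
    have b1 : Real.log (s / (1 - s)) ≤ Real.log (1 / (1 - s)) := by
      apply Real.log_le_log (by positivity)
      gcongr
    have b2 : Real.log (1 / (1 - s)) = Real.log (1/(1-s)) := rfl
    have b3 : (1 - s) * Real.log (1 / (1 - s)) ≤ q * Real.log (1/q) :=
      aux_negMulLog_mono (1-s) q ht0 htq hq3
    have b4 : Real.log (1/q) = (w:ℝ) * Real.log (17/16) := by
      rw [hqdef, one_div, Real.log_inv, Real.log_pow,
        show Real.log ((16:ℝ)/17) = -Real.log (17/16) by
          rw [show (16:ℝ)/17 = (17/16)⁻¹ by norm_num, Real.log_inv]]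
      ring
    calc (1 - s) * Real.log (s / (1 - s)) ≤ (1 - s) * Real.log (1 / (1 - s)) :=
          mul_le_mul_of_nonneg_left b1 ht0.le
      _ ≤ q * Real.log (1/q) := b3
      _ = q * ((w:ℝ) * Real.log (17/16)) := by rw [b4]
  -- positivity facts
  have hA0 : (0:ℝ) < (0.9616 : ℝ) ^ (-k) := zpow_pos (by norm_num) _
  have hL0 : (0:ℝ) ≤ Real.log (17/16) := Real.log_nonneg (by norm_num)
  have hB0 : (0:ℝ) ≤ q * ((w:ℝ) * Real.log (17/16)) := by positivity
  -- combine
  have step1 : (0.9616 : ℝ) ^ (-k) * ((1 - s) * Real.log (s / (1 - s)))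
      ≤ ((0.9616:ℝ)⁻¹ * ((w:ℝ)+1) ^ c) * (q * ((w:ℝ) * Real.log (17/16))) := by
    calc (0.9616 : ℝ) ^ (-k) * ((1 - s) * Real.log (s / (1 - s)))
        ≤ (0.9616 : ℝ) ^ (-k) * (q * ((w:ℝ) * Real.log (17/16))) :=
          mul_le_mul_of_nonneg_left hB hA0.le
      _ ≤ ((0.9616:ℝ)⁻¹ * ((w:ℝ)+1) ^ c) * (q * ((w:ℝ) * Real.log (17/16))) :=
          mul_le_mul_of_nonneg_right hA hB0
  have step2 : ((0.9616:ℝ)⁻¹ * ((w:ℝ)+1) ^ c) * (q * ((w:ℝ) * Real.log (17/16)))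
      = (0.9616:ℝ)⁻¹ * (((w:ℝ)+1) ^ c * (q * (w:ℝ))) * Real.log (17/16) := by
    ring
  have step3 : ((w:ℝ)+1) ^ c * (q * (w:ℝ)) ≤ (46:ℝ) ^ c * ((16/17:ℝ)^45 * 45) :=
    aux_F_mono c hc0 hc1 w hw
  -- numeric bound on 46^c
  have h46 : (46:ℝ) ^ c ≤ 1/0.9595 := by
    have hl46 : Real.log 46 ≤ Real.log 45 + 1/45 := by
      have : Real.log (46/45) ≤ 46/45 - 1 :=
        Real.log_le_sub_one_of_pos (by norm_num)
      have e : Real.log (46/45 : ℝ) = Real.log 46 - Real.log 45 :=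
        Real.log_div (by norm_num) (by norm_num)
      rw [e] at this
      linarith
    have hx : c * Real.log 46 ≤ 0.0405 := by
      have hl45pos : (0:ℝ) < Real.log 45 := by linarith
      rw [hcdef, div_mul_eq_mul_div, div_le_iff₀ hl45pos]
      nlinarith
    have hx0 : 0 ≤ c * Real.log 46 := by
      apply mul_nonneg hc0
      have : Real.log 45 ≤ Real.log 46 := by
        apply Real.log_le_log (by norm_num) (by norm_num)
      linarith
    have e46 : (46:ℝ) ^ c = Real.exp (c * Real.log 46) := by
      rw [Real.rpow_def_of_pos (by norm_num)]; ring_nf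
    have hexp : Real.exp (c * Real.log 46) ≤ 1/0.9595 := by
      have h5 : 1 - c * Real.log 46 ≤ Real.exp (-(c * Real.log 46)) := by
        have := Real.add_one_le_exp (-(c * Real.log 46)); linarith
      have h6 : Real.exp (c * Real.log 46) * Real.exp (-(c * Real.log 46)) = 1 := by
        rw [← Real.exp_add]; simp
      have h7 : Real.exp (c * Real.log 46) * (1 - c * Real.log 46) ≤ 1 := by
        calc Real.exp (c * Real.log 46) * (1 - c * Real.log 46)
            ≤ Real.exp (c * Real.log 46) * Real.exp (-(c * Real.log 46)) :=
              mul_le_mul_of_nonneg_left h5 (Real.exp_pos _).le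
          _ = 1 := h6
      have h8 : (0.9595:ℝ) ≤ 1 - c * Real.log 46 := by linarith
      have h9 := mul_le_mul_of_nonneg_left h8 (Real.exp_pos (c * Real.log 46)).le
      rw [le_div_iff₀ (by norm_num : (0:ℝ) < 0.9595)]
      linarith
    rw [e46]; exact hexp
  -- final numeric computation
  have final : (0.9616:ℝ)⁻¹ * ((46:ℝ) ^ c * ((16/17:ℝ)^45 * 45)) * Real.log (17/16)
      ≤ 1/5 := by
    have hL : Real.log (17/16) ≤ 1073/17424 := aux_log_17_16
    calc (0.9616:ℝ)⁻¹ * ((46:ℝ) ^ c * ((16/17:ℝ)^45 * 45)) * Real.log (17/16)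
        ≤ (0.9616:ℝ)⁻¹ * ((1/0.9595) * (0.06535 * 45)) * (1073/17424) := by
          gcongr
      _ ≤ 1/5 := by norm_num
  calc (0.9616 : ℝ) ^ (-k) * ((1 - s) * Real.log (s / (1 - s)))
      ≤ ((0.9616:ℝ)⁻¹ * ((w:ℝ)+1) ^ c) * (q * ((w:ℝ) * Real.log (17/16))) := step1
    _ = (0.9616:ℝ)⁻¹ * (((w:ℝ)+1) ^ c * (q * (w:ℝ))) * Real.log (17/16) := step2
    _ ≤ (0.9616:ℝ)⁻¹ * ((46:ℝ) ^ c * ((16/17:ℝ)^45 * 45)) * Real.log (17/16) := by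
        apply mul_le_mul_of_nonneg_right _ hL0
        exact mul_le_mul_of_nonneg_left step3 (by norm_num)
    _ ≤ 1/5 := final
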